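/- arXiv:0810.3422 — 2 statements merged into one kernel-verified Lean document; each statement's English description precedes it below -/
import Mathlib

section
/- Fix an integer q ≥ 3 and ε > 0 with ε < (q-2)/q. With E(A_{d,w}) as in the RA ensemble, the quantity ∑_{w=1}^{K} ∑_{d=1}^{⌊N^{(q-2)/q - ε}⌋} E(A_{d,w}) tends to 0 as N = qK → ∞. Consequently the fraction of codes in the ensemble with minimum distance at most N^{(q-2)/q-ε} tends to zero. -/
/-- Ensemble-average IOWEF of the repeat-accumulate ensemble with repetition factor `q`,
block length `N = qK`: `E(A_{d,w}) = C(K,w)·C(d-1,⌈qw/2⌉-1)·C(N-d,⌊qw/2⌋)/C(N,qw)`. -/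
noncomputable def RAEnum (q K d w : ℕ) : ℝ :=
  (K.choose w : ℝ) *
    ((d - 1).choose ((q * w + 1) / 2 - 1) * (q * K - d).choose (q * w / 2) : ℝ) /
    ((q * K).choose (q * w) : ℝ)

open Finset Nat in
private lemma choose_le_two_pow' (n k : ℕ) : n.choose k ≤ 2 ^ n := by
  rcases le_or_gt k n with h | h
  · calc n.choose k ≤ ∑ i ∈ range (n+1), n.choose i :=
        Finset.single_le_sum (fun i _ => Nat.zero_le _) (mem_range.2 (Nat.lt_succ_of_le h))
    _ = 2 ^ n := Nat.sum_range_choose n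
  · simp [Nat.choose_eq_zero_of_lt h]

open Finset Nat in
private lemma natkey (D N n h f : ℕ) (hhf : h + f = n) (hnN : n ≤ N) (hh1 : 1 ≤ h) :
    D.choose (h-1) * (N.choose f * (N - n + 1)^h) ≤ D^(h-1) * h * (2^n * N.choose n) := by
  have hfn : f ≤ n := by omega
  have hG : (N - n + 1)^h ≤ h ! * (N - f).choose h := by
    have h1 : N - f + 1 - h = N - n + 1 := by omega
    calc (N - n + 1)^h = (N - f + 1 - h)^h := by rw [h1]
    _ ≤ (N - f).descFactorial h := Nat.pow_sub_le_descFactorial _ _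
    _ = h ! * (N - f).choose h := Nat.descFactorial_eq_factorial_mul_choose _ _
  have hID : N.choose f * (N - f).choose h = N.choose n * n.choose f := by
    have h2 := Nat.choose_mul (n := N) (k := n) (s := f) hfn
    rw [show n - f = h by omega] at h2
    omega
  have hDF : h ! * D.choose (h-1) ≤ h * D^(h-1) := by
    calc h ! * D.choose (h-1) = h * ((h-1)! * D.choose (h-1)) := by
          rw [← Nat.mul_factorial_pred (n := h) (by omega), mul_assoc]
    _ = h * D.descFactorial (h-1) := by
          rw [← Nat.descFactorial_eq_factorial_mul_choose]
    _ ≤ h * D^(h-1) := Nat.mul_le_mul_left h (Nat.descFactorial_le_pow _ _)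
  calc D.choose (h-1) * (N.choose f * (N - n + 1)^h)
      ≤ D.choose (h-1) * (N.choose f * (h ! * (N - f).choose h)) := by gcongr
    _ = (h ! * D.choose (h-1)) * (N.choose f * (N - f).choose h) := by ring
    _ = (h ! * D.choose (h-1)) * (N.choose n * n.choose f) := by rw [hID]
    _ ≤ (h * D^(h-1)) * (N.choose n * 2^n) := by
          exact Nat.mul_le_mul hDF (Nat.mul_le_mul_left _ (choose_le_two_pow' n f))
    _ = D^(h-1) * h * (2^n * N.choose n) := by ring

open Finset Nat in
private lemma bound1 (q K w D : ℕ) (hq : 3 ≤ q) (hw1 : 1 ≤ w) (hwK : w ≤ K) (hK1 : 1 ≤ K)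
    (hn2 : 2*(q*w) ≤ q*K) :
    ∑ d ∈ Icc 1 D, RAEnum q K d w
      ≤ (K:ℝ)^w * 2^(q*w) * (4*D/(q*K))^((q*w+1)/2) := by
  set n := q*w with hn
  set N := q*K with hN
  set h := (n+1)/2 with hh
  set f := n/2 with hf
  have hn3 : 3 ≤ n := le_trans hq (Nat.le_mul_of_pos_right q hw1)
  have hh1 : 1 ≤ h := by omega
  have hhf : h + f = n := by omega
  have hnN : n ≤ N := by omega
  have hNpos : 0 < N := by omega
  have hEpos : (0:ℝ) < (N.choose n : ℝ) := by
    exact_mod_cast Nat.choose_pos hnN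
  have hQpos : (0:ℝ) < ((N - n + 1 : ℕ) : ℝ)^h := by positivity
  -- Step A: each term bounded
  have stepA : ∀ d ∈ Icc 1 D, RAEnum q K d w
      ≤ (K.choose w : ℝ) * ((D.choose (h-1) : ℝ) * (N.choose f : ℝ)) / (N.choose n : ℝ) := by
    intro d hd
    simp only [mem_Icc] at hd
    have e1 : (d-1).choose (h-1) ≤ D.choose (h-1) := Nat.choose_le_choose _ (by omega)
    have e2 : (N-d).choose f ≤ N.choose f := Nat.choose_le_choose _ (Nat.sub_le N d)
    show (K.choose w : ℝ) * ((d - 1).choose ((q * w + 1) / 2 - 1) * (N - d).choose (q*w / 2) : ℝ)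
        / (N.choose n : ℝ) ≤ _
    rw [show (q*w+1)/2 - 1 = h - 1 from rfl, show q*w/2 = f from rfl]
    gcongr
    all_goals first | exact_mod_cast e1 | exact_mod_cast e2
  -- Step B: sum
  have stepB : ∑ d ∈ Icc 1 D, RAEnum q K d w
      ≤ (D:ℝ) * ((K.choose w : ℝ) * ((D.choose (h-1) : ℝ) * (N.choose f : ℝ)) / (N.choose n : ℝ)) := by
    calc ∑ d ∈ Icc 1 D, RAEnum q K d w
        ≤ ∑ _d ∈ Icc 1 D, (K.choose w : ℝ) * ((D.choose (h-1) : ℝ) * (N.choose f : ℝ)) / (N.choose n : ℝ) :=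
          Finset.sum_le_sum stepA
      _ = (D:ℝ) * _ := by rw [Finset.sum_const, Nat.card_Icc]; simp [nsmul_eq_mul]
  refine stepB.trans ?_
  -- Step C
  have keyC : ((D.choose (h-1) : ℝ) * (N.choose f : ℝ)) / (N.choose n : ℝ)
      ≤ ((D:ℝ)^(h-1) * h * 2^n) / ((N - n + 1 : ℕ) : ℝ)^h := by
    rw [div_le_div_iff₀ hEpos hQpos]
    have := natkey D N n h f hhf hnN hh1
    calc (D.choose (h-1) : ℝ) * (N.choose f : ℝ) * ((N - n + 1 : ℕ) : ℝ)^h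
        = ((D.choose (h-1) * (N.choose f * (N - n + 1)^h) : ℕ) : ℝ) := by push_cast; ring
      _ ≤ ((D^(h-1) * h * (2^n * N.choose n) : ℕ) : ℝ) := by exact_mod_cast this
      _ = (D:ℝ)^(h-1) * h * 2^n * (N.choose n : ℝ) := by push_cast; ring
  have hKw : (K.choose w : ℝ) ≤ (K:ℝ)^w := by exact_mod_cast Nat.choose_le_pow K w
  have hhle : (h:ℝ) ≤ 2^h := by exact_mod_cast (Nat.lt_two_pow_self (n := h)).le
  have hN2 : (N:ℝ)/2 ≤ ((N - n + 1 : ℕ) : ℝ) := by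
    have h1 : N ≤ 2 * (N - n + 1) := by omega
    have h2 := (Nat.cast_le (α := ℝ)).2 h1
    push_cast at h2 ⊢
    linarith
  have hhD : (1:ℕ) ≤ h := hh1
  calc (D:ℝ) * ((K.choose w : ℝ) * ((D.choose (h-1) : ℝ) * (N.choose f : ℝ)) / (N.choose n : ℝ))
      = (D:ℝ) * (K.choose w : ℝ) * (((D.choose (h-1) : ℝ) * (N.choose f : ℝ)) / (N.choose n : ℝ)) := by
        ring
    _ ≤ (D:ℝ) * (K:ℝ)^w * (((D:ℝ)^(h-1) * h * 2^n) / ((N - n + 1 : ℕ) : ℝ)^h) := by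
        gcongr
        all_goals first | positivity | exact keyC
    _ = (K:ℝ)^w * 2^n * ((h:ℝ) * (D:ℝ)^h / ((N - n + 1 : ℕ) : ℝ)^h) := by
        have hD : (D:ℝ)^h = (D:ℝ)^(1 + (h-1)) := by congr 1; omega
        rw [hD, pow_add, pow_one]
        ring
    _ ≤ (K:ℝ)^w * 2^n * ((2:ℝ)^h * (D:ℝ)^h / ((N:ℝ)/2)^h) := by
        have hNr : (0:ℝ) < (N:ℝ) := by exact_mod_cast hNpos
        refine mul_le_mul_of_nonneg_left ?_ (by positivity)
        refine div_le_div₀ (by positivity)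
          (mul_le_mul_of_nonneg_right hhle (by positivity)) (by positivity)
          (pow_le_pow_left₀ (by positivity) hN2 h)
    _ = (K:ℝ)^w * 2^n * (4*D/N)^h := by
        have hNr : ((N:ℕ):ℝ) ≠ 0 := by positivity
        rw [show (4:ℝ) = 2^2 by norm_num]
        rw [div_pow, div_pow]
        rw [mul_pow ((2:ℝ)^2)]
        rw [← pow_mul]
        field_simp
        ring
    _ = (K:ℝ)^w * 2^(q*w) * (4*(D:ℝ)/((q:ℝ)*(K:ℝ)))^((q*w+1)/2) := by
        simp only [hN, hn, hh]
        push_cast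
        ring

open Finset Filter in
/-- The expected number of codewords of weight at most `N^{(q-2)/q - ε}` in the RA
ensemble tends to `0` as the block length `N = qK` tends to infinity; consequently the
fraction of codes with minimum distance at most `N^{(q-2)/q-ε}` vanishes. -/
theorem RA_cumulative_WEF_tendsto_zero (q : ℕ) (hq : 3 ≤ q) (ε : ℝ) (hε : 0 < ε)
    (hε' : ε < ((q : ℝ) - 2) / (q : ℝ)) :
    Tendsto (fun K : ℕ =>
        ∑ w ∈ Icc 1 K,
          ∑ d ∈ Icc 1 (⌊((q * K : ℕ) : ℝ) ^ (((q : ℝ) - 2) / (q : ℝ) - ε)⌋₊),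
            RAEnum q K d w)
      atTop (nhds 0) := by
  have hq0 : (0:ℝ) < q := by exact_mod_cast (by omega : 0 < q)
  set c : ℝ := ((q:ℝ) - 2) / (q:ℝ) - ε with hcdef
  have hc0 : 0 < c := sub_pos.2 hε'
  have hc1 : c < 1 := by
    have h1 : ((q:ℝ)-2)/q < 1 := by rw [div_lt_one hq0]; linarith
    simp only [hcdef]; linarith
  have hNtend : Tendsto (fun K : ℕ => ((q*K : ℕ):ℝ)) atTop atTop := by
    have h1 : Tendsto (fun K : ℕ => (K:ℝ)) atTop atTop := tendsto_natCast_atTop_atTop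
    have h2 := h1.const_mul_atTop hq0
    exact h2.congr fun K => by push_cast; ring
  have hr'tend : Tendsto (fun K : ℕ => (2:ℝ)^(2*q) * ((q*K : ℕ):ℝ) ^ (-(ε*q/2))) atTop (nhds 0) := by
    have h1 := (tendsto_rpow_neg_atTop (show (0:ℝ) < ε*q/2 by positivity)).comp hNtend
    have h2 := h1.const_mul ((2:ℝ)^(2*q))
    simpa using h2
  have hgoal : Tendsto (fun K : ℕ => 2 * ((2:ℝ)^(2*q) * ((q*K : ℕ):ℝ) ^ (-(ε*q/2))))
      atTop (nhds 0) := by simpa using hr'tend.const_mul 2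
  refine squeeze_zero' ?_ ?_ hgoal
  · filter_upwards with K
    refine Finset.sum_nonneg fun w _ => Finset.sum_nonneg fun d _ => ?_
    unfold RAEnum; positivity
  · have ev1 : ∀ᶠ K : ℕ in atTop, (4:ℝ) ≤ ((q*K:ℕ):ℝ)^(1-c) :=
      ((tendsto_rpow_atTop (by linarith)).comp hNtend).eventually_ge_atTop 4
    have ev2 : ∀ᶠ K : ℕ in atTop, (1:ℝ) ≤ ((q*K:ℕ):ℝ)^c :=
      ((tendsto_rpow_atTop hc0).comp hNtend).eventually_ge_atTop 1
    have ev3 : ∀ᶠ K : ℕ in atTop, (2:ℝ)^(2*q) * ((q*K:ℕ):ℝ)^(-(ε*q/2)) ≤ 1/2 :=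
      (hr'tend.eventually_lt_const (by norm_num : (0:ℝ) < 1/2)).mono fun K h => h.le
    filter_upwards [ev1, ev2, ev3, eventually_ge_atTop 1] with K h4 h1c h12 hK1
    set N := q * K with hNdef
    set D := ⌊((N:ℕ):ℝ)^c⌋₊ with hDdef
    set r' : ℝ := (2:ℝ)^(2*q) * ((N:ℕ):ℝ)^(-(ε*q/2)) with hr'def
    have hNpos : 0 < N := Nat.mul_pos (by omega) hK1
    have hNr : (0:ℝ) < ((N:ℕ):ℝ) := by exact_mod_cast hNpos
    have hD1 : 1 ≤ D := Nat.le_floor (by exact_mod_cast h1c)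
    have hDle : ((D:ℕ):ℝ) ≤ ((N:ℕ):ℝ)^c := Nat.floor_le (by positivity)
    have hNsplit : ((N:ℕ):ℝ)^(1-c) * ((N:ℕ):ℝ)^c = ((N:ℕ):ℝ) := by
      rw [← Real.rpow_add hNr]; simp
    have hD4 : 4 * D ≤ N := by
      have h5 : ((4*D : ℕ):ℝ) ≤ ((N:ℕ):ℝ) := by
        push_cast
        nlinarith [Real.rpow_nonneg hNr.le c]
      exact_mod_cast h5
    have hr'0 : (0:ℝ) ≤ r' := by positivity
    have perw : ∀ w ∈ Icc 1 K, (∑ d ∈ Icc 1 D, RAEnum q K d w) ≤ r'^w := by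
      intro w hw
      simp only [mem_Icc] at hw
      have hqw3 : 3 ≤ q * w := le_trans hq (Nat.le_mul_of_pos_right q hw.1)
      by_cases hcase : (q*w+1)/2 ≤ D
      · have hn2 : 2*(q*w) ≤ q*K := by omega
        refine (bound1 q K w D hq hw.1 hw.2 hK1 hn2).trans ?_
        have hqK : (q:ℝ)*(K:ℝ) = ((N:ℕ):ℝ) := by rw [hNdef]; push_cast; ring
        rw [hqK]
        set xr : ℝ := 4*((D:ℕ):ℝ)/((N:ℕ):ℝ) with hxrdef
        have hDr : (0:ℝ) < ((D:ℕ):ℝ) := by exact_mod_cast hD1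
        have hx0 : 0 < xr := by positivity
        have hx1 : xr ≤ 1 := by
          rw [hxrdef, div_le_one hNr]
          have := hD4
          have h6 : ((4*D:ℕ):ℝ) ≤ ((N:ℕ):ℝ) := by exact_mod_cast this
          push_cast at h6; linarith
        set h : ℕ := (q*w+1)/2 with hhdef
        have step1 : xr^h ≤ xr ^ ((q:ℝ)*w/2) := by
          rw [← Real.rpow_natCast xr h]
          apply Real.rpow_le_rpow_of_exponent_ge hx0 hx1
          have h7 : q*w ≤ 2*h := by omega
          have h8 : ((q*w:ℕ):ℝ) ≤ ((2*h:ℕ):ℝ) := by exact_mod_cast h7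
          push_cast at h8; linarith
        have step2 : xr ^ ((q:ℝ)*w/2) = (xr ^ ((q:ℝ)/2))^w := by
          rw [← Real.rpow_natCast (xr ^ ((q:ℝ)/2)) w, ← Real.rpow_mul hx0.le]
          congr 1; ring
        set s : ℝ := xr ^ ((q:ℝ)/2) with hsdef
        have hs0 : 0 ≤ s := Real.rpow_nonneg hx0.le _
        have hsle : (K:ℝ) * 2^q * s ≤ r' := by
          have hxle : xr ≤ 4 * ((N:ℕ):ℝ)^(c-1) := by
            have h9 : ((N:ℕ):ℝ)^(c-1) = ((N:ℕ):ℝ)^c / ((N:ℕ):ℝ) := by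
              rw [Real.rpow_sub hNr, Real.rpow_one]
            rw [hxrdef, h9, mul_div_assoc]
            gcongr
          have hsle1 : s ≤ (4 * ((N:ℕ):ℝ)^(c-1)) ^ ((q:ℝ)/2) :=
            Real.rpow_le_rpow hx0.le hxle (by positivity)
          have h44 : (4:ℝ) ^ ((q:ℝ)/2) = 2^q := by
            rw [show (4:ℝ) = 2^(2:ℕ) by norm_num, ← Real.rpow_natCast 2 2,
              ← Real.rpow_mul (by norm_num : (0:ℝ) ≤ 2), ← Real.rpow_natCast 2 q]
            congr 1
            push_cast
            ring
          have hsplit : (4 * ((N:ℕ):ℝ)^(c-1)) ^ ((q:ℝ)/2)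
              = 2^q * (((N:ℕ):ℝ) ^ ((c-1)*((q:ℝ)/2))) := by
            rw [Real.mul_rpow (by norm_num) (Real.rpow_nonneg hNr.le _)]
            rw [← Real.rpow_mul hNr.le, h44]
          have hexp : (c-1)*((q:ℝ)/2) = -1 + (-(ε*(q:ℝ)/2)) := by
            rw [hcdef]
            field_simp
            ring
          have hKN : (K:ℝ) * (((N:ℕ):ℝ))⁻¹ ≤ 1 := by
            have hKle : (K:ℝ) ≤ ((N:ℕ):ℝ) := by
              exact_mod_cast Nat.le_mul_of_pos_left K (by omega : 0 < q)
            calc (K:ℝ) * (((N:ℕ):ℝ))⁻¹ ≤ ((N:ℕ):ℝ) * (((N:ℕ):ℝ))⁻¹ :=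
                  mul_le_mul_of_nonneg_right hKle (by positivity)
              _ = 1 := mul_inv_cancel₀ hNr.ne'
          calc (K:ℝ)*2^q*s
              ≤ (K:ℝ)*2^q*(2^q * (((N:ℕ):ℝ))⁻¹ * ((N:ℕ):ℝ)^(-(ε*(q:ℝ)/2))) := by
                refine mul_le_mul_of_nonneg_left ?_ (by positivity)
                calc s ≤ (4*((N:ℕ):ℝ)^(c-1))^((q:ℝ)/2) := hsle1
                  _ = 2^q * ((N:ℕ):ℝ)^((c-1)*((q:ℝ)/2)) := hsplit
                  _ = 2^q * (((N:ℕ):ℝ))⁻¹ * ((N:ℕ):ℝ)^(-(ε*(q:ℝ)/2)) := by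
                      rw [hexp, Real.rpow_add hNr, Real.rpow_neg_one]
                      ring
            _ = 2^(2*q) * ((K:ℝ)*(((N:ℕ):ℝ))⁻¹) * ((N:ℕ):ℝ)^(-(ε*(q:ℝ)/2)) := by
                rw [two_mul, pow_add]
                ring
            _ ≤ 2^(2*q) * 1 * ((N:ℕ):ℝ)^(-(ε*(q:ℝ)/2)) := by
                refine mul_le_mul_of_nonneg_right
                  (mul_le_mul_of_nonneg_left hKN (by positivity)) (by positivity)
            _ = r' := by rw [hr'def]; ring
        calc (K:ℝ)^w * 2^(q*w) * xr^h
            ≤ (K:ℝ)^w * 2^(q*w) * (xr ^ ((q:ℝ)*w/2)) := by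
              refine mul_le_mul_of_nonneg_left step1 (by positivity)
          _ = ((K:ℝ) * 2^q * s)^w := by
              rw [step2, mul_pow, mul_pow, pow_mul]
          _ ≤ r'^w := pow_le_pow_left₀ (by positivity) hsle w
      · have hz : ∀ d ∈ Icc 1 D, RAEnum q K d w = 0 := by
          intro d hd
          simp only [mem_Icc] at hd
          have h10 : (d-1).choose ((q*w+1)/2 - 1) = 0 :=
            Nat.choose_eq_zero_of_lt (by omega)
          unfold RAEnum
          rw [show q*K = N from rfl, h10]
          push_cast
          ring
        rw [Finset.sum_eq_zero hz]
        positivity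
    calc ∑ w ∈ Icc 1 K, ∑ d ∈ Icc 1 D, RAEnum q K d w
        ≤ ∑ w ∈ Icc 1 K, r'^w := Finset.sum_le_sum perw
      _ ≤ ∑ w ∈ Icc 1 K, r' * (1/2:ℝ)^(w-1) := by
          refine Finset.sum_le_sum fun w hw => ?_
          simp only [mem_Icc] at hw
          have h11 : r'^w = r'^(1+(w-1)) := by congr 1; omega
          rw [h11, pow_add, pow_one]
          exact mul_le_mul_of_nonneg_left (pow_le_pow_left₀ hr'0 h12 _) hr'0
      _ = r' * ∑ w ∈ Icc 1 K, (1/2:ℝ)^(w-1) := by rw [Finset.mul_sum]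
      _ ≤ r' * 2 := by
          refine mul_le_mul_of_nonneg_left ?_ hr'0
          rw [← Finset.Ico_add_one_right_eq_Icc, Finset.sum_Ico_eq_sum_range]
          simp only [Nat.add_sub_cancel_left, Nat.succ_sub_one]
          exact sum_geometric_two_le K
      _ = 2 * r' := by ring
end

section
/- For the RA ensemble bound: for all integers q ≥ 3, K ≥ 1, w with 1 ≤ w ≤ K, d ≥ 1, and N = qK, the expected enumerator satisfies E(A_{d,w}) ≤ (N^w · d^{⌈qw/2⌉-1} · N^{⌊qw/2⌋} / (q^w · N^{qw})) · 2^{qw} · ⌈qw/2⌉ · exp(w(w-1)/(2N)). -/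
open Finset
open scoped Nat

private lemma vdm_term_le (a b i j : ℕ) :
    a.choose i * b.choose j ≤ (a + b).choose (i + j) := by
  rw [Nat.add_choose_eq]
  exact Finset.single_le_sum (f := fun ij : ℕ × ℕ => a.choose ij.1 * b.choose ij.2)
    (fun _ _ => Nat.zero_le _) (a := (i, j)) (Finset.HasAntidiagonal.mem_antidiagonal.2 rfl)

private lemma choose_le_two_pow (m c : ℕ) : m.choose c ≤ 2 ^ m := by
  rcases le_or_gt c m with h | h
  · rw [← Nat.sum_range_choose m]
    exact Finset.single_le_sum (f := fun i => m.choose i) (fun _ _ => Nat.zero_le _)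
      (Finset.mem_range.2 (Nat.lt_succ_of_le h))
  · simp [Nat.choose_eq_zero_of_lt h]

/-- The key product-pairing inequality for the small-`d` regime. -/
private lemma case2_prod (N d c f m : ℕ) (hc : 2 ≤ c) (hcd : c ≤ d) (h4d : 4 * d < N)
    (hdf : d + f ≤ N) (hcf : c + f = m) (hfc : c - 1 ≤ f) :
    (d - 1).descFactorial (c - 1) * (N - d).descFactorial f * N ^ c
      ≤ d ^ (c - 1) * N.descFactorial m := by
  set c1 := c - 1 with hc1
  set r := f - c1 with hr
  rw [Nat.descFactorial_eq_prod_range, Nat.descFactorial_eq_prod_range,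
    Nat.descFactorial_eq_prod_range]
  have hsplit1 : ∏ i ∈ range f, (N - d - i)
      = (∏ i ∈ range c1, (N - d - i)) * ∏ i ∈ range r, (N - d - (c1 + i)) := by
    rw [show f = c1 + r by omega, Finset.prod_range_add]
  have hsplit2 : ∏ i ∈ range m, (N - i)
      = (N - 0) * ((∏ i ∈ range c1, (N - (1 + i))) * ((∏ i ∈ range c1, (N - (1 + (c1 + i))))
          * ∏ i ∈ range r, (N - (1 + (c1 + (c1 + i)))))) := by
    rw [show m = 1 + (c1 + (c1 + r)) by omega, Finset.prod_range_add,
      Finset.prod_range_add, Finset.prod_range_add, Finset.prod_range_one]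
  have hpowc : N ^ c = N * N ^ c1 := by
    rw [← pow_succ']; congr 1; omega
  rw [hsplit1, hsplit2, hpowc]
  have key1 : (∏ i ∈ range c1, (d - 1 - i)) * (∏ i ∈ range c1, (N - d - i)) * N ^ c1
      ≤ d ^ c1 * (∏ i ∈ range c1, (N - (1 + i))) * ∏ i ∈ range c1, (N - (1 + (c1 + i))) := by
    have lhs_eq : ∏ i ∈ range c1, ((d - 1 - i) * (N - d - i) * N)
        = (∏ i ∈ range c1, (d - 1 - i)) * (∏ i ∈ range c1, (N - d - i)) * N ^ c1 := by
      rw [Finset.prod_mul_distrib, Finset.prod_mul_distrib, Finset.prod_const,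
        Finset.card_range]
    have rhs_eq : ∏ i ∈ range c1, (d * (N - (1 + i)) * (N - (1 + (c1 + i))))
        = d ^ c1 * (∏ i ∈ range c1, (N - (1 + i))) * ∏ i ∈ range c1, (N - (1 + (c1 + i))) := by
      rw [Finset.prod_mul_distrib, Finset.prod_mul_distrib, Finset.prod_const,
        Finset.card_range]
    rw [← lhs_eq, ← rhs_eq]
    apply Finset.prod_le_prod'
    intro i hi
    have hi' : i < c1 := Finset.mem_range.1 hi
    zify [show i ≤ d - 1 by omega, show d ≤ N by omega, show i ≤ N - d by omega,
      show 1 + i ≤ N by omega, show 1 + (c1 + i) ≤ N by omega, show 1 ≤ d by omega,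
      show (c1 : ℤ) = (c : ℤ) - 1 by omega]
    nlinarith [mul_nonneg (mul_nonneg (by omega : (0:ℤ) ≤ (N:ℤ)) (by omega : (0:ℤ) ≤ (i:ℤ)+1))
        (by omega : (0:ℤ) ≤ (N:ℤ) - 2*d - (i+1) + 1),
      mul_nonneg (mul_nonneg (by omega : (0:ℤ) ≤ (d:ℤ)) (by omega : (0:ℤ) ≤ (i:ℤ)+1))
        (by omega : (0:ℤ) ≤ (c:ℤ) + (i+1) - 1),
      mul_nonneg (mul_nonneg (by omega : (0:ℤ) ≤ (N:ℤ)) (by omega : (0:ℤ) ≤ (d:ℤ)))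
        (by omega : (0:ℤ) ≤ (d:ℤ) - c)]
  have key2 : ∏ i ∈ range r, (N - d - (c1 + i))
      ≤ ∏ i ∈ range r, (N - (1 + (c1 + (c1 + i)))) := by
    apply Finset.prod_le_prod'
    intro i _
    omega
  calc (∏ i ∈ range c1, (d - 1 - i))
        * ((∏ i ∈ range c1, (N - d - i)) * ∏ i ∈ range r, (N - d - (c1 + i)))
        * (N * N ^ c1)
      = ((∏ i ∈ range c1, (d - 1 - i)) * (∏ i ∈ range c1, (N - d - i)) * N ^ c1)
        * (∏ i ∈ range r, (N - d - (c1 + i))) * N := by ring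
    _ ≤ (d ^ c1 * (∏ i ∈ range c1, (N - (1 + i))) * ∏ i ∈ range c1, (N - (1 + (c1 + i))))
        * (∏ i ∈ range r, (N - (1 + (c1 + (c1 + i))))) * N :=
      Nat.mul_le_mul_right _ (Nat.mul_le_mul key1 key2)
    _ = d ^ c1 * ((N - 0) * ((∏ i ∈ range c1, (N - (1 + i))) * ((∏ i ∈ range c1, (N - (1 + (c1 + i))))
        * ∏ i ∈ range r, (N - (1 + (c1 + (c1 + i))))))) := by
      rw [Nat.sub_zero]; ring

/-- Main counting inequality, in ℕ, with abstract parameters. -/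
private lemma key_nat (N m c f K w d : ℕ) (hm3 : 3 ≤ m) (hmN : m ≤ N)
    (hc2 : 2 ≤ c) (hf1 : 1 ≤ f) (hcf : c + f = m) (hmc : m ≤ 2 * c) (hcm : 2 * c ≤ m + 1)
    (hd : 1 ≤ d) :
    K.choose w * ((d - 1).choose (c - 1) * (N - d).choose f) * N ^ c
      ≤ K ^ w * d ^ (c - 1) * 2 ^ m * c * N.choose m := by
  have hfc : c - 1 ≤ f := by omega
  rcases lt_or_ge d c with hdc | hcd
  · have h0 : (d - 1).choose (c - 1) = 0 := Nat.choose_eq_zero_of_lt (by omega)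
    simp [h0]
  rcases lt_or_ge (N - d) f with hdf | hdf
  · have h0 : (N - d).choose f = 0 := Nat.choose_eq_zero_of_lt hdf
    simp [h0]
  have hdN : d + f ≤ N := by
    rcases le_or_gt d N with h | h
    · omega
    · omega
  rcases le_or_gt N (4 * d) with h4d | h4d
  · -- Case I : 4d ≥ N
    have h1 : d * (d - 1).choose (c - 1) = c * d.choose c := by
      have h := Nat.add_one_mul_choose_eq (d - 1) (c - 1)
      rw [show d - 1 + 1 = d by omega, show c - 1 + 1 = c by omega] at h
      rw [h]; ring
    have h2 : (N - d + 1) * (N - d).choose f = (f + 1) * (N - d + 1).choose (f + 1) := by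
      have h := Nat.add_one_mul_choose_eq (N - d) f
      rw [h]; ring
    have h3 : d.choose c * (N - d).choose f ≤ N.choose m := by
      have h := vdm_term_le d (N - d) c f
      rwa [show d + (N - d) = N by omega, hcf] at h
    have h4 : (d - 1).choose (c - 1) * (N - d + 1).choose (f + 1) ≤ N.choose m := by
      have h := vdm_term_le (d - 1) (N - d + 1) (c - 1) (f + 1)
      rwa [show d - 1 + (N - d + 1) = N by omega, show c - 1 + (f + 1) = m by omega] at h
    have hIa : (N + 1) * ((d - 1).choose (c - 1) * (N - d).choose f)
        ≤ (m + 1) * N.choose m := by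
      calc (N + 1) * ((d - 1).choose (c - 1) * (N - d).choose f)
          = (d * (d - 1).choose (c - 1)) * (N - d).choose f
            + (d - 1).choose (c - 1) * ((N - d + 1) * (N - d).choose f) := by
            rw [show N + 1 = d + (N - d + 1) by omega]; ring
        _ = c * (d.choose c * (N - d).choose f)
            + (f + 1) * ((d - 1).choose (c - 1) * (N - d + 1).choose (f + 1)) := by
            rw [h1, h2]; ring
        _ ≤ c * N.choose m + (f + 1) * N.choose m :=
            Nat.add_le_add (Nat.mul_le_mul_left c h3) (Nat.mul_le_mul_left (f + 1) h4)
        _ = (m + 1) * N.choose m := by rw [← Nat.add_mul]; congr 1; omega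
    have e1 : (m + 1) * 4 ^ (c - 1) ≤ c * 2 ^ m := by
      have h4pow : (4 : ℕ) ^ (c - 1) = 2 ^ (2 * c - 2) := by
        rw [show (4 : ℕ) = 2 ^ 2 by norm_num, ← pow_mul]
        congr 1; omega
      have hsplitpow : (2 : ℕ) ^ m = 2 ^ (m - (2 * c - 2)) * 2 ^ (2 * c - 2) := by
        rw [← pow_add]; congr 1; omega
      have hcoef : m + 1 ≤ c * 2 ^ (m - (2 * c - 2)) := by
        rcases (by omega : m - (2 * c - 2) = 1 ∨ m - (2 * c - 2) = 2) with h | h <;>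
          rw [h] <;> [rw [pow_one]; rw [show (2:ℕ)^2 = 4 by norm_num]] <;> omega
      calc (m + 1) * 4 ^ (c - 1) = (m + 1) * 2 ^ (2 * c - 2) := by rw [h4pow]
        _ ≤ (c * 2 ^ (m - (2 * c - 2))) * 2 ^ (2 * c - 2) :=
            Nat.mul_le_mul_right _ hcoef
        _ = c * 2 ^ m := by rw [hsplitpow]; ring
    have e2 : N ^ c ≤ (N + 1) * (4 ^ (c - 1) * d ^ (c - 1)) := by
      calc N ^ c = N * N ^ (c - 1) := by rw [← pow_succ']; congr 1; omega
        _ ≤ (N + 1) * (4 * d) ^ (c - 1) :=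
            Nat.mul_le_mul (by omega) (Nat.pow_le_pow_left h4d _)
        _ = (N + 1) * (4 ^ (c - 1) * d ^ (c - 1)) := by rw [mul_pow]
    have hIb : K.choose w * ((m + 1) * N ^ c) ≤ K ^ w * d ^ (c - 1) * 2 ^ m * c * (N + 1) := by
      calc K.choose w * ((m + 1) * N ^ c)
          ≤ K ^ w * ((m + 1) * ((N + 1) * (4 ^ (c - 1) * d ^ (c - 1)))) :=
            Nat.mul_le_mul (Nat.choose_le_pow K w) (Nat.mul_le_mul_left _ e2)
        _ = K ^ w * d ^ (c - 1) * ((m + 1) * 4 ^ (c - 1)) * (N + 1) := by ring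
        _ ≤ K ^ w * d ^ (c - 1) * (c * 2 ^ m) * (N + 1) :=
            Nat.mul_le_mul_right _ (Nat.mul_le_mul_left _ e1)
        _ = K ^ w * d ^ (c - 1) * 2 ^ m * c * (N + 1) := by ring
    have hcomb : (K.choose w * ((d - 1).choose (c - 1) * (N - d).choose f) * N ^ c) * (N + 1)
        ≤ (K ^ w * d ^ (c - 1) * 2 ^ m * c * N.choose m) * (N + 1) := by
      calc (K.choose w * ((d - 1).choose (c - 1) * (N - d).choose f) * N ^ c) * (N + 1)
          = K.choose w * N ^ c * ((N + 1) * ((d - 1).choose (c - 1) * (N - d).choose f)) := by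
            ring
        _ ≤ K.choose w * N ^ c * ((m + 1) * N.choose m) := Nat.mul_le_mul_left _ hIa
        _ = K.choose w * ((m + 1) * N ^ c) * N.choose m := by ring
        _ ≤ K ^ w * d ^ (c - 1) * 2 ^ m * c * (N + 1) * N.choose m :=
            Nat.mul_le_mul_right _ hIb
        _ = (K ^ w * d ^ (c - 1) * 2 ^ m * c * N.choose m) * (N + 1) := by ring
    exact Nat.le_of_mul_le_mul_right hcomb (by omega)
  · -- Case II : 4d < N
    have hprod : (d - 1).descFactorial (c - 1) * (N - d).descFactorial f * N ^ c
        ≤ d ^ (c - 1) * N.descFactorial m :=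
      case2_prod N d c f m hc2 hcd h4d hdN hcf hfc
    have hcw : K.choose w * m.choose c ≤ K ^ w * 2 ^ m :=
      Nat.mul_le_mul (Nat.choose_le_pow K w) (choose_le_two_pow m c)
    have hmain : K.choose w * m.choose c
          * ((d - 1).descFactorial (c - 1) * (N - d).descFactorial f * N ^ c)
        ≤ K ^ w * 2 ^ m * (d ^ (c - 1) * N.descFactorial m) :=
      Nat.mul_le_mul hcw hprod
    have hT : 0 < (c - 1)! * f ! * m.choose c :=
      Nat.mul_pos (Nat.mul_pos (Nat.factorial_pos _) (Nat.factorial_pos _))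
        (Nat.choose_pos (by omega))
    have lhs_eq : K.choose w * ((d - 1).choose (c - 1) * (N - d).choose f) * N ^ c
          * ((c - 1)! * f ! * m.choose c)
        = K.choose w * m.choose c
            * ((d - 1).descFactorial (c - 1) * (N - d).descFactorial f * N ^ c) := by
      rw [Nat.descFactorial_eq_factorial_mul_choose (d - 1) (c - 1),
        Nat.descFactorial_eq_factorial_mul_choose (N - d) f]
      ring
    have hfact : c * (c - 1)! * f ! * m.choose c = m ! := by
      have hcc : c * (c - 1)! = c ! := by
        rw [show c = c - 1 + 1 by omega, Nat.factorial_succ]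
        congr 2 <;> omega
      have h2 := Nat.choose_mul_factorial_mul_factorial (show c ≤ m by omega)
      rw [show m - c = f by omega] at h2
      calc c * (c - 1)! * f ! * m.choose c = m.choose c * c ! * f ! := by rw [← hcc]; ring
        _ = m ! := h2
    have rhs_eq : K ^ w * d ^ (c - 1) * 2 ^ m * c * N.choose m
          * ((c - 1)! * f ! * m.choose c)
        = K ^ w * 2 ^ m * (d ^ (c - 1) * N.descFactorial m) := by
      rw [Nat.descFactorial_eq_factorial_mul_choose N m]
      calc K ^ w * d ^ (c - 1) * 2 ^ m * c * N.choose m * ((c - 1)! * f ! * m.choose c)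
          = K ^ w * 2 ^ m * (d ^ (c - 1) * ((c * (c - 1)! * f ! * m.choose c) * N.choose m)) := by
            ring
        _ = K ^ w * 2 ^ m * (d ^ (c - 1) * (m ! * N.choose m)) := by rw [hfact]
    have hfinal : (K.choose w * ((d - 1).choose (c - 1) * (N - d).choose f) * N ^ c)
          * ((c - 1)! * f ! * m.choose c)
        ≤ (K ^ w * d ^ (c - 1) * 2 ^ m * c * N.choose m) * ((c - 1)! * f ! * m.choose c) := by
      rw [lhs_eq, rhs_eq]
      exact hmain
    exact Nat.le_of_mul_le_mul_right hfinal hT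

/-- Upper bound on the RA ensemble-average IOWEF:
`E(A_{d,w}) ≤ (N^w d^{⌈qw/2⌉-1} N^{⌊qw/2⌋} / (q^w N^{qw})) · 2^{qw} · ⌈qw/2⌉ · e^{w(w-1)/(2N)}`. -/
theorem RAEnum_upper_bound (q K w d : ℕ) (hq : 3 ≤ q) (hK : 1 ≤ K)
    (hw : 1 ≤ w) (hwK : w ≤ K) (hd : 1 ≤ d) :
    RAEnum q K d w ≤
      ((q * K : ℕ) : ℝ) ^ w * (d : ℝ) ^ ((q * w + 1) / 2 - 1) *
        ((q * K : ℕ) : ℝ) ^ (q * w / 2) / ((q : ℝ) ^ w * ((q * K : ℕ) : ℝ) ^ (q * w)) *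
        2 ^ (q * w) * (((q * w + 1) / 2 : ℕ) : ℝ) *
        Real.exp ((w : ℝ) * ((w : ℝ) - 1) / (2 * (q * K : ℕ))) := by
  have hm3 : 3 ≤ q * w := le_trans hq (Nat.le_mul_of_pos_right q hw)
  have hmN : q * w ≤ q * K := Nat.mul_le_mul_left q hwK
  have hNpos : 0 < q * K := by positivity
  have hkey := key_nat (q * K) (q * w) ((q * w + 1) / 2) (q * w / 2) K w d hm3 hmN
    (by omega) (by omega) (by omega) (by omega) (by omega) hd
  have hcpos : (0 : ℝ) < ((q * K).choose (q * w) : ℝ) := by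
    exact_mod_cast Nat.choose_pos hmN
  have hNR : (0 : ℝ) < ((q * K : ℕ) : ℝ) := by exact_mod_cast hNpos
  have hNc : (0 : ℝ) < ((q * K : ℕ) : ℝ) ^ ((q * w + 1) / 2) := by positivity
  have step1 : RAEnum q K d w ≤
      ((K ^ w * d ^ ((q * w + 1) / 2 - 1) * 2 ^ (q * w) * ((q * w + 1) / 2) : ℕ) : ℝ) /
        ((q * K : ℕ) : ℝ) ^ ((q * w + 1) / 2) := by
    rw [RAEnum, div_le_div_iff₀ hcpos hNc]
    calc (K.choose w : ℝ) *
          ((d - 1).choose ((q * w + 1) / 2 - 1) * (q * K - d).choose (q * w / 2) : ℝ) *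
          ((q * K : ℕ) : ℝ) ^ ((q * w + 1) / 2)
        = ((K.choose w * ((d - 1).choose ((q * w + 1) / 2 - 1) * (q * K - d).choose (q * w / 2))
            * (q * K) ^ ((q * w + 1) / 2) : ℕ) : ℝ) := by push_cast; ring
      _ ≤ ((K ^ w * d ^ ((q * w + 1) / 2 - 1) * 2 ^ (q * w) * ((q * w + 1) / 2)
            * (q * K).choose (q * w) : ℕ) : ℝ) := by exact_mod_cast hkey
      _ = ((K ^ w * d ^ ((q * w + 1) / 2 - 1) * 2 ^ (q * w) * ((q * w + 1) / 2) : ℕ) : ℝ)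
            * ((q * K).choose (q * w) : ℝ) := by push_cast; ring
  refine step1.trans ?_
  have hexp : 1 ≤ Real.exp ((w : ℝ) * ((w : ℝ) - 1) / (2 * (q * K : ℕ))) := by
    have hw1 : (1 : ℝ) ≤ (w : ℝ) := by exact_mod_cast hw
    have h0 : (0 : ℝ) ≤ (w : ℝ) * ((w : ℝ) - 1) := by nlinarith
    have harg : (0 : ℝ) ≤ (w : ℝ) * ((w : ℝ) - 1) / (2 * (q * K : ℕ)) :=
      div_nonneg h0 (by positivity)
    calc (1 : ℝ) = Real.exp 0 := Real.exp_zero.symm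
      _ ≤ _ := Real.exp_le_exp.2 harg
  have hbase : ((K ^ w * d ^ ((q * w + 1) / 2 - 1) * 2 ^ (q * w) * ((q * w + 1) / 2) : ℕ) : ℝ) /
        ((q * K : ℕ) : ℝ) ^ ((q * w + 1) / 2)
      = ((q * K : ℕ) : ℝ) ^ w * (d : ℝ) ^ ((q * w + 1) / 2 - 1) *
        ((q * K : ℕ) : ℝ) ^ (q * w / 2) / ((q : ℝ) ^ w * ((q * K : ℕ) : ℝ) ^ (q * w)) *
        2 ^ (q * w) * (((q * w + 1) / 2 : ℕ) : ℝ) := by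
    have hqR : (0 : ℝ) < (q : ℝ) := by positivity
    have hsplit : ((q * K : ℕ) : ℝ) ^ (q * w)
        = ((q * K : ℕ) : ℝ) ^ ((q * w + 1) / 2) * ((q * K : ℕ) : ℝ) ^ (q * w / 2) := by
      rw [← pow_add]; congr 1; omega
    have hqKw : ((q * K : ℕ) : ℝ) ^ w = (q : ℝ) ^ w * (K : ℝ) ^ w := by
      push_cast; rw [mul_pow]
    rw [hsplit, hqKw]
    push_cast
    field_simp
  rw [hbase]
  have hb0 : (0 : ℝ) ≤ ((q * K : ℕ) : ℝ) ^ w * (d : ℝ) ^ ((q * w + 1) / 2 - 1) *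
        ((q * K : ℕ) : ℝ) ^ (q * w / 2) / ((q : ℝ) ^ w * ((q * K : ℕ) : ℝ) ^ (q * w)) *
        2 ^ (q * w) * (((q * w + 1) / 2 : ℕ) : ℝ) := by positivity
  exact le_mul_of_one_le_right hb0 hexp
end
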